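/- Claim: Let p ∈ (0,1) and p_k := (1-p)·p^k for k ∈ ℕ₀ (the geometric distribution, which has p₀ > 0, finite mean and unbounded support). Let ℙ* be the unique probability measure on Σ with ℙ*([ξ₀,…,ξ_{n-1}]) = p_{ξ₀}·p_{ξ₀ξ₁}·⋯·p_{ξ_{n-2}ξ_{n-1}} for every cylinder, and for ω ∈ Σ and k ∈ ℕ₀ set F*_k(ω) := 0 if ω_k = 0 and F*_k(ω) := 1 if ω_k ≥ 1. Then for every n ≥ 1 and every (j₀,…,j_{n-1}) ∈ {0,1}ⁿ, ℙ*({ω ∈ Σ : F*_k(ω) = j_k for all k < n}) = p^{∑_{k<n} j_k}·(1-p)^{n − ∑_{k<n} j_k}. -/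

import Mathlib

open MeasureTheory Filter Topology Set
open scoped BigOperators

noncomputable section

/-- Tail sum ∑_{j ≥ i} p_j. -/
def tailSum (p : ℕ → ℝ) (i : ℕ) : ℝ := ∑' j : ℕ, p (i + j)

/-- Invariant distribution m_i = (∑_{j≥i} p_j)/(1+E). -/
def mdist (p : ℕ → ℝ) (E : ℝ) (i : ℕ) : ℝ := tailSum p i / (1 + E)

/-- Transition matrix entries: p_{0j} = p_j, p_{(k+1)k} = 1, else 0. -/
def Ptrans (p : ℕ → ℝ) (i j : ℕ) : ℝ := if i = 0 then p j else if i = j + 1 then 1 else 0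

/-- Reversed transition matrix q_{ij} = (m_j / m_i) · p_{ji}. -/
def qtrans (p : ℕ → ℝ) (E : ℝ) (i j : ℕ) : ℝ := mdist p E j / mdist p E i * Ptrans p j i

/-- Cylinder set of length n determined by the first n values of ξ. -/
def cyl (ξ : ℕ → ℕ) (n : ℕ) : Set (ℕ → ℕ) := {ω | ∀ i < n, ω i = ξ i}

/-- Probability assigned by ℙ⁻ to the cylinder [ξ₀,…,ξ_{n-1}]. -/
def cylProbQ (p : ℕ → ℝ) (E : ℝ) (ξ : ℕ → ℕ) (n : ℕ) : ℝ :=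
  mdist p E (ξ 0) * ∏ i ∈ Finset.range (n - 1), qtrans p E (ξ i) (ξ (i + 1))

/-- Probability assigned by ℙ to the cylinder [ξ₀,…,ξ_{n-1}]. -/
def cylProbP (p : ℕ → ℝ) (E : ℝ) (ξ : ℕ → ℕ) (n : ℕ) : ℝ :=
  mdist p E (ξ 0) * ∏ i ∈ Finset.range (n - 1), Ptrans p (ξ i) (ξ (i + 1))

/-- The family f₀ = g, f_k = f for k ≥ 1. -/
def fseq (a b : ℝ) (g f : Set.Icc a b → Set.Icc a b) : ℕ → Set.Icc a b → Set.Icc a b :=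
  fun k => if k = 0 then g else f

/-- itf fI ξ n = f_{ξ₀} ∘ f_{ξ₁} ∘ ⋯ ∘ f_{ξ_{n-1}}. -/
def itf (a b : ℝ) (fI : ℕ → Set.Icc a b → Set.Icc a b) (ξ : ℕ → ℕ) :
    ℕ → Set.Icc a b → Set.Icc a b
  | 0 => id
  | n + 1 => fun x => itf a b fI ξ n (fI (ξ n) x)

/-- itfRev fI a n = f_{a_{n-1}} ∘ ⋯ ∘ f_{a_0}  (i.e. f_{a_n}∘⋯∘f_{a_1} with 1-based indexing). -/
def itfRev (a b : ℝ) (fI : ℕ → Set.Icc a b → Set.Icc a b) (c : ℕ → ℕ) :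
    ℕ → Set.Icc a b → Set.Icc a b
  | 0 => id
  | n + 1 => fun x => fI (c n) (itfRev a b fI c n x)

/-- I_ξ = ⋂_{n ≥ 1} (f_{ξ₀}∘⋯∘f_{ξ_{n-1}})(I). -/
def Iset (a b : ℝ) (fI : ℕ → Set.Icc a b → Set.Icc a b) (ξ : ℕ → ℕ) : Set (Set.Icc a b) :=
  ⋂ n : ℕ, itf a b fI ξ (n + 1) '' Set.univ

/-- S = {ξ : diam I_ξ = 0}. -/
def Sset (a b : ℝ) (fI : ℕ → Set.Icc a b → Set.Icc a b) : Set (ℕ → ℕ) :=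
  {ξ | EMetric.diam (Iset a b fI ξ) = 0}

/-- The j-th sliceM of a measure on ℕ × I:  μ_j(C) = μ̂({j} × C). -/
def sliceM (a b : ℝ) (μ : Measure (ℕ × Set.Icc a b)) (k : ℕ) : Measure (Set.Icc a b) :=
  Measure.map Prod.snd (μ.restrict ({k} ×ˢ (Set.univ : Set (Set.Icc a b))))

/-- The Markov operator T:  (Tμ̂)({j}×C) = μ_{j+1}(f_j⁻¹ C) + p_j·μ₀(f_j⁻¹ C). -/
def TOp (a b : ℝ) (p : ℕ → ℝ) (fI : ℕ → Set.Icc a b → Set.Icc a b)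
    (μ : Measure (ℕ × Set.Icc a b)) : Measure (ℕ × Set.Icc a b) :=
  Measure.sum fun j =>
    Measure.map (fun x => (j, fI j x))
      (sliceM a b μ (j + 1) + ENNReal.ofReal (p j) • sliceM a b μ 0)

/-- Extend ξ : Fin n → ℕ to ℕ → ℕ by 0. -/
def padSeq {n : ℕ} (ξ : Fin n → ℕ) : ℕ → ℕ := fun i => if h : i < n then ξ ⟨i, h⟩ else 0

/-- S_nˣ = {ξ : x ∈ I_ξⁿ}. -/
def SnX (a b : ℝ) (fI : ℕ → Set.Icc a b → Set.Icc a b) (x : Set.Icc a b) (n : ℕ) :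
    Set (ℕ → ℕ) :=
  {ξ | x ∈ itf a b fI ξ n '' Set.univ}

/-- Σ_n^W = {ω : σ^{iN}(ω) ∉ W for i = 0,…,n-1}, for W the cylinder [ξ₀,…,ξ_{N-1}]. -/
def SigW (ξ : ℕ → ℕ) (N n : ℕ) : Set (ℕ → ℕ) :=
  {ω | ∀ i < n, ¬ (∀ k < N, ω (i * N + k) = ξ k)}

open Classical in
/-- The block-replacement map H_n: replace every length-N block equal to (ξ₀,…,ξ_{N-1})
by (η₀,…,η_{N-1}). -/
noncomputable def Hn (ξ η : ℕ → ℕ) (N : ℕ) (c : ℕ → ℕ) : ℕ → ℕ :=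
  fun i => if (∀ k < N, c (i / N * N + k) = ξ k) then η (i % N) else c i

/-- The splitting condition. -/
def Splitting (a b : ℝ) (fI : ℕ → Set.Icc a b → Set.Icc a b) (P : Measure (ℕ → ℕ)) : Prop :=
  ∃ (l r : ℕ) (c d : ℕ → ℕ), 1 ≤ l ∧ 1 ≤ r ∧
    0 < P (cyl c l) ∧ 0 < P (cyl d r) ∧ c (l - 1) = d (r - 1) ∧
    (itfRev a b fI c l '' Set.univ) ∩ (itfRev a b fI d r '' Set.univ) = ∅

namespace Stmt18Aux

/-- Transition entries as extended nonnegative reals. -/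
noncomputable def PtE (p : ℝ) (i j : ℕ) : ENNReal :=
  ENNReal.ofReal (Ptrans (fun k => (1 - p) * p ^ k) i j)

/-- Sum over admissible continuations of length `r` for pattern `j`, starting from state `m`. -/
noncomputable def Phi (p : ℝ) : ℕ → (ℕ → ℕ) → ℕ → ENNReal
  | 0, _, _ => 1
  | r + 1, j, m =>
      ∑' m' : ℕ, if (if m' = 0 then 0 else 1) = j 0
        then PtE p m m' * Phi p r (fun k => j (k + 1)) m' else 0

/-- The pattern event at offset `n`. -/
def Bset (j : ℕ → ℕ) (r n : ℕ) : Set (ℕ → ℕ) :=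
  {ω | ∀ k < r, (if ω (n + k) = 0 then 0 else 1) = j k}

lemma Ptrans_nonneg (p : ℝ) (hp0 : 0 ≤ p) (hp1 : p ≤ 1) (i j : ℕ) :
    0 ≤ Ptrans (fun k => (1 - p) * p ^ k) i j := by
  have h1 : (0:ℝ) ≤ 1 - p := by linarith
  unfold Ptrans
  split_ifs
  · exact mul_nonneg h1 (pow_nonneg hp0 _)
  · norm_num
  · norm_num

lemma PtE_zero (p : ℝ) (m' : ℕ) : PtE p 0 m' = ENNReal.ofReal ((1 - p) * p ^ m') := by
  simp [PtE, Ptrans]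

lemma PtE_succ (p : ℝ) (m m' : ℕ) : PtE p (m + 1) m' = if m' = m then 1 else 0 := by
  simp only [PtE, Ptrans]
  by_cases h : m' = m
  · subst h; simp
  · have h2 : ¬ (m + 1 = m' + 1) := by omega
    simp [h, h2, Ne.symm h]

lemma Phi_succ (p : ℝ) (r : ℕ) (j : ℕ → ℕ) (m : ℕ) :
    Phi p (r + 1) j m = ∑' m' : ℕ, if (if m' = 0 then 0 else 1) = j 0
      then PtE p m m' * Phi p r (fun k => j (k + 1)) m' else 0 := rfl

lemma Phi_succ_succ (p : ℝ) (r : ℕ) (j : ℕ → ℕ) (m : ℕ) :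
    Phi p (r + 1) j (m + 1) =
      if (if m = 0 then 0 else 1) = j 0 then Phi p r (fun k => j (k + 1)) m else 0 := by
  rw [Phi_succ, tsum_eq_single m]
  · rw [PtE_succ]; simp
  · intro b hb
    rw [PtE_succ]
    simp [hb]

lemma geom_tsum {p : ℝ} (hp0 : 0 ≤ p) (hp1 : p < 1) :
    ∑' m : ℕ, ENNReal.ofReal ((1 - p) * p ^ m) = 1 := by
  have h1 : (0:ℝ) < 1 - p := by linarith
  have hsum : Summable (fun m : ℕ => (1 - p) * p ^ m) :=
    (summable_geometric_of_lt_one hp0 hp1).mul_left _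
  rw [← ENNReal.ofReal_tsum_of_nonneg (fun m => mul_nonneg h1.le (pow_nonneg hp0 _)) hsum,
    tsum_mul_left, tsum_geometric_of_lt_one hp0 hp1, mul_inv_cancel₀ h1.ne']
  simp

lemma Phi_eval (p : ℝ) (hp0 : 0 < p) (hp1 : p < 1) :
    ∀ r (j : ℕ → ℕ), (∀ k < r, j k ≤ 1) →
      Phi p r j 0 =
          ENNReal.ofReal (p ^ (∑ k ∈ Finset.range r, j k) *
            (1 - p) ^ (r - ∑ k ∈ Finset.range r, j k)) ∧
        ∑' m : ℕ, ENNReal.ofReal ((1 - p) * p ^ m) * Phi p r j (m + 1) =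
          ENNReal.ofReal (p ^ (∑ k ∈ Finset.range r, j k) *
            (1 - p) ^ (r - ∑ k ∈ Finset.range r, j k)) := by
  have h1 : (0:ℝ) ≤ 1 - p := by linarith
  intro r
  induction r with
  | zero =>
    intro j hj
    constructor
    · simp [Phi]
    · have : ∀ m : ℕ, Phi p 0 j (m + 1) = 1 := fun m => rfl
      simp only [this, mul_one]
      simpa using geom_tsum hp0.le hp1
  | succ r ih =>
    intro j hj
    have hj' : ∀ k < r, (fun k => j (k + 1)) k ≤ 1 := fun k hk => hj (k + 1) (by omega)
    obtain ⟨ih1, ih2⟩ := ih (fun k => j (k + 1)) hj'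
    set s' := ∑ k ∈ Finset.range r, j (k + 1) with hs'def
    have hs'le : s' ≤ r := by
      have : s' ≤ ∑ _k ∈ Finset.range r, 1 :=
        Finset.sum_le_sum (fun k hk => hj' k (Finset.mem_range.mp hk))
      simpa using this
    have hsum : ∑ k ∈ Finset.range (r + 1), j k = s' + j 0 := Finset.sum_range_succ' j r
    have hj0 := hj 0 (by omega)
    rcases Nat.le_one_iff_eq_zero_or_eq_one.mp hj0 with h0 | h0
    · -- j 0 = 0
      have hsum0 : ∑ k ∈ Finset.range (r + 1), j k = s' := by rw [hsum, h0, add_zero]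
      have hexp : (r + 1) - s' = (r - s') + 1 := by omega
      have key : ENNReal.ofReal (1 - p) *
          ENNReal.ofReal (p ^ s' * (1 - p) ^ (r - s')) =
          ENNReal.ofReal (p ^ (∑ k ∈ Finset.range (r + 1), j k) *
            (1 - p) ^ ((r + 1) - ∑ k ∈ Finset.range (r + 1), j k)) := by
        rw [hsum0, ← ENNReal.ofReal_mul h1]
        congr 1
        rw [hexp]; ring
      constructor
      · rw [Phi_succ, tsum_eq_single 0]
        · have hc : (if (0:ℕ) = 0 then (0:ℕ) else 1) = j 0 := by simp [h0]
          rw [if_pos hc, PtE_zero, ih1]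
          simpa using key
        · intro b hb
          have hc : ¬ ((if b = 0 then (0:ℕ) else 1) = j 0) := by simp [hb, h0]
          rw [if_neg hc]
      · have hterm : ∀ m : ℕ, ENNReal.ofReal ((1 - p) * p ^ m) * Phi p (r + 1) j (m + 1) =
            if m = 0 then ENNReal.ofReal ((1 - p) * p ^ m) * Phi p r (fun k => j (k + 1)) m
            else 0 := by
          intro m
          rw [Phi_succ_succ]
          by_cases hm : m = 0
          · subst hm; simp [h0]
          · have : ¬ ((if m = 0 then (0:ℕ) else 1) = j 0) := by simp [hm, h0]
            rw [if_neg this, mul_zero, if_neg hm]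
        rw [tsum_congr hterm, tsum_eq_single 0 (fun b hb => by rw [if_neg hb])]
        rw [if_pos rfl, ih1]
        simpa using key
    · -- j 0 = 1
      have hsum1 : ∑ k ∈ Finset.range (r + 1), j k = s' + 1 := by rw [hsum, h0]
      have hexp : (r + 1) - (s' + 1) = r - s' := by omega
      have key : ENNReal.ofReal p *
          ENNReal.ofReal (p ^ s' * (1 - p) ^ (r - s')) =
          ENNReal.ofReal (p ^ (∑ k ∈ Finset.range (r + 1), j k) *
            (1 - p) ^ ((r + 1) - ∑ k ∈ Finset.range (r + 1), j k)) := by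
        rw [hsum1, hexp, ← ENNReal.ofReal_mul hp0.le]
        congr 1
        ring
      have hPt : ∀ m : ℕ, ENNReal.ofReal ((1 - p) * p ^ (m + 1)) =
          ENNReal.ofReal p * ENNReal.ofReal ((1 - p) * p ^ m) := by
        intro m
        rw [← ENNReal.ofReal_mul hp0.le]
        congr 1
        ring
      constructor
      · rw [Phi_succ, tsum_eq_zero_add' ENNReal.summable]
        have hc0 : ¬ ((if (0:ℕ) = 0 then (0:ℕ) else 1) = j 0) := by simp [h0]
        rw [if_neg hc0, zero_add]
        have hterm : ∀ m : ℕ,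
            (if (if m + 1 = 0 then (0:ℕ) else 1) = j 0
              then PtE p 0 (m + 1) * Phi p r (fun k => j (k + 1)) (m + 1) else 0) =
            ENNReal.ofReal p *
              (ENNReal.ofReal ((1 - p) * p ^ m) * Phi p r (fun k => j (k + 1)) (m + 1)) := by
          intro m
          have hc : (if m + 1 = 0 then (0:ℕ) else 1) = j 0 := by simp [h0]
          rw [if_pos hc, PtE_zero, hPt, mul_assoc]
        rw [tsum_congr hterm, ENNReal.tsum_mul_left, ih2, key]
      · have hterm : ∀ m : ℕ, ENNReal.ofReal ((1 - p) * p ^ m) * Phi p (r + 1) j (m + 1) =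
            if m = 0 then 0
            else ENNReal.ofReal ((1 - p) * p ^ m) * Phi p r (fun k => j (k + 1)) m := by
          intro m
          rw [Phi_succ_succ]
          by_cases hm : m = 0
          · subst hm
            have : ¬ ((if (0:ℕ) = 0 then (0:ℕ) else 1) = j 0) := by simp [h0]
            rw [if_neg this, mul_zero, if_pos rfl]
          · have : (if m = 0 then (0:ℕ) else 1) = j 0 := by simp [hm, h0]
            rw [if_pos this, if_neg hm]
        rw [tsum_congr hterm, tsum_eq_zero_add' ENNReal.summable]
        have hterm2 : ∀ m : ℕ,
            (if m + 1 = 0 then 0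
              else ENNReal.ofReal ((1 - p) * p ^ (m + 1)) * Phi p r (fun k => j (k + 1)) (m + 1)) =
            ENNReal.ofReal p *
              (ENNReal.ofReal ((1 - p) * p ^ m) * Phi p r (fun k => j (k + 1)) (m + 1)) := by
          intro m
          rw [if_neg (Nat.succ_ne_zero m), hPt, mul_assoc]
        rw [tsum_congr hterm2, ENNReal.tsum_mul_left, ih2, key]
        simp

lemma cyl_measurable (ξ : ℕ → ℕ) (n : ℕ) : MeasurableSet (cyl ξ n) := by
  have h : cyl ξ n = ⋂ i ∈ Finset.range n, (fun ω : ℕ → ℕ => ω i) ⁻¹' {ξ i} := by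
    ext ω; simp [cyl]
  rw [h]
  exact Finset.measurableSet_biInter _
    (fun i _ => (measurable_pi_apply i) (measurableSet_singleton _))

lemma Bset_measurable (j : ℕ → ℕ) (r n : ℕ) : MeasurableSet (Bset j r n) := by
  have h : Bset j r n = ⋂ k ∈ Finset.range r,
      (fun ω : ℕ → ℕ => ω (n + k)) ⁻¹' {m | (if m = 0 then 0 else 1) = j k} := by
    ext ω; simp [Bset]
  rw [h]
  exact Finset.measurableSet_biInter _
    (fun k _ => (measurable_pi_apply (n + k)) MeasurableSet.of_discrete)

end Stmt18Aux

open Stmt18Aux in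
/-- for the geometric distribution p_k = (1-p)·pᵏ, the induced 0/1 process
F* is an i.i.d. Bernoulli sequence: the probability of any pattern (j₀,…,j_{n-1}) is
p^{∑ j_k}·(1-p)^{n-∑ j_k}. -/
theorem stmt18 (p : ℝ) (hp0 : 0 < p) (hp1 : p < 1)
    (Pstar : Measure (ℕ → ℕ)) [IsProbabilityMeasure Pstar]
    (hP : ∀ n, 1 ≤ n → ∀ ξ : ℕ → ℕ,
      Pstar (cyl ξ n) = ENNReal.ofReal
        (((1 - p) * p ^ (ξ 0)) *
          ∏ i ∈ Finset.range (n - 1), Ptrans (fun k => (1 - p) * p ^ k) (ξ i) (ξ (i + 1)))) :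
    ∀ n, 1 ≤ n → ∀ j : ℕ → ℕ, (∀ k < n, j k ≤ 1) →
      Pstar {ω : ℕ → ℕ | ∀ k < n, (if ω k = 0 then 0 else 1) = j k} =
        ENNReal.ofReal (p ^ (∑ k ∈ Finset.range n, j k) *
          (1 - p) ^ (n - ∑ k ∈ Finset.range n, j k)) := by
  -- extending a cylinder by one coordinate multiplies by a transition weight
  have cyl_ext : ∀ N (ξ : ℕ → ℕ) (m' : ℕ),
      Pstar (cyl (Function.update ξ (N + 1) m') (N + 2)) =
        Pstar (cyl ξ (N + 1)) * PtE p (ξ N) m' := by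
    intro N ξ m'
    rw [hP (N + 2) (by omega), hP (N + 1) (by omega)]
    have e1 : N + 2 - 1 = N + 1 := by omega
    have e2 : N + 1 - 1 = N := by omega
    rw [e1, e2]
    have h1 : ∀ i, i < N + 1 → Function.update ξ (N + 1) m' i = ξ i := by
      intro i hi
      exact Function.update_of_ne (by omega) _ _
    have h2 : Function.update ξ (N + 1) m' (N + 1) = m' := Function.update_self _ _ _
    rw [Finset.prod_range_succ]
    have hprod : ∏ i ∈ Finset.range N,
        Ptrans (fun k => (1 - p) * p ^ k) (Function.update ξ (N + 1) m' i)
          (Function.update ξ (N + 1) m' (i + 1)) =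
        ∏ i ∈ Finset.range N, Ptrans (fun k => (1 - p) * p ^ k) (ξ i) (ξ (i + 1)) := by
      refine Finset.prod_congr rfl (fun i hi => ?_)
      have hi' := Finset.mem_range.mp hi
      rw [h1 i (by omega), h1 (i + 1) (by omega)]
    rw [hprod, h1 0 (by omega), h1 N (by omega), h2, PtE,
      ← ENNReal.ofReal_mul' (Ptrans_nonneg p hp0.le hp1.le _ _)]
    congr 1
    ring
  -- conditional pattern probabilities after a cylinder
  have ML : ∀ r (n : ℕ) (ξ j : ℕ → ℕ), 1 ≤ n →
      Pstar (cyl ξ n ∩ Bset j r n) = Pstar (cyl ξ n) * Phi p r j (ξ (n - 1)) := by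
    intro r
    induction r with
    | zero =>
      intro n ξ j hn
      have hB : Bset j 0 n = Set.univ := by
        ext ω; simp [Bset]
      have hPhi : Phi p 0 j (ξ (n - 1)) = 1 := rfl
      rw [hB, Set.inter_univ, hPhi, mul_one]
    | succ r ih =>
      intro n ξ j hn
      obtain ⟨N, rfl⟩ : ∃ N, n = N + 1 := ⟨n - 1, by omega⟩
      have e2 : N + 1 - 1 = N := by omega
      -- decomposition over the value of ω (N+1)
      have hdecomp : cyl ξ (N + 1) ∩ Bset j (r + 1) (N + 1) =
          ⋃ m' : ℕ, if (if m' = 0 then 0 else 1) = j 0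
            then cyl (Function.update ξ (N + 1) m') (N + 2) ∩
              Bset (fun k => j (k + 1)) r (N + 2) else ∅ := by
        ext ω
        simp only [Set.mem_iUnion, Set.mem_inter_iff]
        constructor
        · rintro ⟨hc, hB⟩
          refine ⟨ω (N + 1), ?_⟩
          have hcond : (if ω (N + 1) = 0 then 0 else 1) = j 0 := by
            have := hB 0 (by omega)
            simpa using this
          rw [if_pos hcond]
          refine ⟨?_, ?_⟩
          · intro i hi
            by_cases hi' : i < N + 1
            · rw [Function.update_of_ne (by omega)]
              exact hc i hi'
            · have : i = N + 1 := by omega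
              subst this
              rw [Function.update_self]
          · intro k hk
            have := hB (k + 1) (by omega)
            have e : N + 1 + (k + 1) = N + 2 + k := by omega
            rw [e] at this
            exact this
        · rintro ⟨m', hm⟩
          by_cases hcond : (if m' = 0 then 0 else 1) = j 0
          · rw [if_pos hcond] at hm
            obtain ⟨hc, hB⟩ := hm
            have hωn : ω (N + 1) = m' := by
              have := hc (N + 1) (by omega)
              rwa [Function.update_self] at this
            constructor
            · intro i hi
              have := hc i (by omega)
              rwa [Function.update_of_ne (by omega)] at this
            · intro k hk
              rcases Nat.eq_zero_or_pos k with hk0 | hk0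
              · subst hk0
                have e : N + 1 + 0 = N + 1 := by omega
                rw [e, hωn]
                exact hcond
              · obtain ⟨k', rfl⟩ : ∃ k', k = k' + 1 := ⟨k - 1, by omega⟩
                have := hB k' (by omega)
                have e : N + 2 + k' = N + 1 + (k' + 1) := by omega
                rwa [e] at this
          · rw [if_neg hcond] at hm
            exact absurd hm (Set.notMem_empty ω)
      have hmeas : ∀ m' : ℕ, MeasurableSet (if (if m' = 0 then 0 else 1) = j 0
          then cyl (Function.update ξ (N + 1) m') (N + 2) ∩
            Bset (fun k => j (k + 1)) r (N + 2) else (∅ : Set (ℕ → ℕ))) := by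
        intro m'
        by_cases h : (if m' = 0 then 0 else 1) = j 0
        · rw [if_pos h]; exact (cyl_measurable _ _).inter (Bset_measurable _ _ _)
        · rw [if_neg h]; exact MeasurableSet.empty
      have hkey : ∀ c : ℕ, ∀ ω : ℕ → ℕ, ω ∈ (if (if c = 0 then 0 else 1) = j 0
          then cyl (Function.update ξ (N + 1) c) (N + 2) ∩
            Bset (fun k => j (k + 1)) r (N + 2) else (∅ : Set (ℕ → ℕ))) → ω (N + 1) = c := by
        intro c ω hc
        by_cases h : (if c = 0 then 0 else 1) = j 0
        · rw [if_pos h] at hc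
          have := hc.1 (N + 1) (by omega)
          rwa [Function.update_self] at this
        · rw [if_neg h] at hc
          exact absurd hc (Set.notMem_empty ω)
      have hdisj : Pairwise (Function.onFun Disjoint (fun m' : ℕ =>
          if (if m' = 0 then 0 else 1) = j 0
            then cyl (Function.update ξ (N + 1) m') (N + 2) ∩
              Bset (fun k => j (k + 1)) r (N + 2) else (∅ : Set (ℕ → ℕ)))) := by
        intro a b hab
        apply Set.disjoint_left.mpr
        intro ω ha hb
        exact hab ((hkey a ω ha).symm.trans (hkey b ω hb))
      rw [hdecomp, measure_iUnion hdisj hmeas]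
      have hterm : ∀ m' : ℕ,
          Pstar (if (if m' = 0 then 0 else 1) = j 0
            then cyl (Function.update ξ (N + 1) m') (N + 2) ∩
              Bset (fun k => j (k + 1)) r (N + 2) else ∅) =
          Pstar (cyl ξ (N + 1)) * (if (if m' = 0 then 0 else 1) = j 0
            then PtE p (ξ N) m' * Phi p r (fun k => j (k + 1)) m' else 0) := by
        intro m'
        by_cases h : (if m' = 0 then 0 else 1) = j 0
        · rw [if_pos h, if_pos h,
            ih (N + 2) (Function.update ξ (N + 1) m') (fun k => j (k + 1)) (by omega)]
          have e3 : N + 2 - 1 = N + 1 := by omega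
          rw [e3, Function.update_self, cyl_ext, mul_assoc]
        · rw [if_neg h, if_neg h]
          simp
      rw [tsum_congr hterm, ENNReal.tsum_mul_left, e2, Phi_succ]
  -- main computation
  intro n hn j hj
  obtain ⟨N, rfl⟩ : ∃ N, n = N + 1 := ⟨n - 1, by omega⟩
  have hA : {ω : ℕ → ℕ | ∀ k < N + 1, (if ω k = 0 then 0 else 1) = j k} =
      ⋃ m' : ℕ, if (if m' = 0 then 0 else 1) = j 0
        then cyl (fun _ => m') 1 ∩ Bset (fun k => j (k + 1)) N 1 else ∅ := by
    ext ω
    simp only [Set.mem_iUnion, Set.mem_setOf_eq]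
    constructor
    · intro h
      refine ⟨ω 0, ?_⟩
      have hcond : (if ω 0 = 0 then 0 else 1) = j 0 := h 0 (by omega)
      rw [if_pos hcond]
      refine ⟨?_, ?_⟩
      · intro i hi
        have : i = 0 := by omega
        rw [this]
      · intro k hk
        have e : 1 + k = k + 1 := by omega
        rw [e]
        exact h (k + 1) (by omega)
    · rintro ⟨m', hm⟩
      by_cases hcond : (if m' = 0 then 0 else 1) = j 0
      · rw [if_pos hcond] at hm
        obtain ⟨hc, hB⟩ := hm
        have hω0 : ω 0 = m' := hc 0 (by omega)
        intro k hk
        rcases Nat.eq_zero_or_pos k with hk0 | hk0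
        · subst hk0
          rw [hω0]
          exact hcond
        · obtain ⟨k', rfl⟩ : ∃ k', k = k' + 1 := ⟨k - 1, by omega⟩
          have := hB k' (by omega)
          have e : 1 + k' = k' + 1 := by omega
          rwa [e] at this
      · rw [if_neg hcond] at hm
        exact absurd hm (Set.notMem_empty ω)
  have hmeas : ∀ m' : ℕ, MeasurableSet (if (if m' = 0 then 0 else 1) = j 0
      then cyl (fun _ => m') 1 ∩ Bset (fun k => j (k + 1)) N 1 else (∅ : Set (ℕ → ℕ))) := by
    intro m'
    by_cases h : (if m' = 0 then 0 else 1) = j 0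
    · rw [if_pos h]; exact (cyl_measurable _ _).inter (Bset_measurable _ _ _)
    · rw [if_neg h]; exact MeasurableSet.empty
  have hkey : ∀ c : ℕ, ∀ ω : ℕ → ℕ, ω ∈ (if (if c = 0 then 0 else 1) = j 0
      then cyl (fun _ => c) 1 ∩ Bset (fun k => j (k + 1)) N 1 else (∅ : Set (ℕ → ℕ))) →
      ω 0 = c := by
    intro c ω hc
    by_cases h : (if c = 0 then 0 else 1) = j 0
    · rw [if_pos h] at hc
      exact hc.1 0 (by omega)
    · rw [if_neg h] at hc
      exact absurd hc (Set.notMem_empty ω)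
  have hdisj : Pairwise (Function.onFun Disjoint (fun m' : ℕ =>
      if (if m' = 0 then 0 else 1) = j 0
        then cyl (fun _ => m') 1 ∩ Bset (fun k => j (k + 1)) N 1 else (∅ : Set (ℕ → ℕ)))) := by
    intro a b hab
    apply Set.disjoint_left.mpr
    intro ω ha hb
    exact hab ((hkey a ω ha).symm.trans (hkey b ω hb))
  rw [hA, measure_iUnion hdisj hmeas]
  have hterm : ∀ m' : ℕ,
      Pstar (if (if m' = 0 then 0 else 1) = j 0
        then cyl (fun _ => m') 1 ∩ Bset (fun k => j (k + 1)) N 1 else ∅) =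
      (if (if m' = 0 then 0 else 1) = j 0
        then PtE p 0 m' * Phi p N (fun k => j (k + 1)) m' else 0) := by
    intro m'
    by_cases h : (if m' = 0 then 0 else 1) = j 0
    · rw [if_pos h, if_pos h, ML N 1 (fun _ => m') (fun k => j (k + 1)) le_rfl,
        hP 1 le_rfl (fun _ => m')]
      simp [PtE, Ptrans]
    · rw [if_neg h, if_neg h]
      simp
  rw [tsum_congr hterm]
  rw [show (∑' m' : ℕ, if (if m' = 0 then 0 else 1) = j 0
      then PtE p 0 m' * Phi p N (fun k => j (k + 1)) m' else 0) = Phi p (N + 1) j 0 from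
    (Phi_succ p N j 0).symm]
  exact (Phi_eval p hp0 hp1 (N + 1) j hj).1

end
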